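/- Two linear orderings of the standard generating set S of a Coxeter group W that induce the same acyclic orientation of the Coxeter diagram Γ (orienting each edge from the earlier to the later generator) yield the same Coxeter element, i.e. the same product of the generators. -/

import Mathlib

private lemma simple_comm_of_M_eq_two {B W : Type*} [Group W] {M : CoxeterMatrix B}
    (cs : CoxeterSystem M W) {a b : B} (h : M a b = 2) :
    cs.simple a * cs.simple b = cs.simple b * cs.simple a := by
  have hp := cs.simple_mul_simple_pow a b
  rw [h, sq] at hp
  have h2 : cs.simple a * cs.simple b = (cs.simple a * cs.simple b)⁻¹ :=
    mul_eq_one_iff_eq_inv.mp hp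
  rw [h2, mul_inv_rev, cs.inv_simple, cs.inv_simple]

private lemma idx_cons_ne {B : Type*} [DecidableEq B] {u v : B} (h : v ≠ u) (l : List B) :
    (v :: l).idxOf u = l.idxOf u + 1 := by
  simpa using List.idxOf_cons_ne l h

private lemma idx_cons_self {B : Type*} [DecidableEq B] (u : B) (l : List B) :
    (u :: l).idxOf u = 0 := List.idxOf_cons_self

private lemma indexOf_erase_lt_iff {B : Type*} [DecidableEq B] {a s t : B}
    (hs : s ≠ a) (ht : t ≠ a) (l : List B) :
    (l.erase a).idxOf s < (l.erase a).idxOf t ↔ l.idxOf s < l.idxOf t := by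
  induction l with
  | nil => simp
  | cons x xs ih =>
    by_cases hx : x = a
    · subst hx
      rw [List.erase_cons_head, idx_cons_ne (Ne.symm hs), idx_cons_ne (Ne.symm ht)]
      omega
    · rw [List.erase_cons_tail (a := a) (b := x) (by simpa using hx)]
      by_cases hsx : s = x
      · subst hsx
        rw [idx_cons_self, idx_cons_self]
        by_cases hts : t = s
        · rw [hts, idx_cons_self, idx_cons_self]
        · rw [idx_cons_ne (Ne.symm hts), idx_cons_ne (Ne.symm hts)]; omega
      · rw [idx_cons_ne (fun h => hsx h.symm), idx_cons_ne (fun h => hsx h.symm)]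
        by_cases htx : t = x
        · subst htx
          rw [idx_cons_self, idx_cons_self]; omega
        · rw [idx_cons_ne (fun h => htx h.symm), idx_cons_ne (fun h => htx h.symm)]
          omega

private lemma pull_front {B W : Type*} [DecidableEq B] [Group W] {M : CoxeterMatrix B}
    (cs : CoxeterSystem M W) (a : B) :
    ∀ l : List B, a ∈ l → (∀ t ∈ l, l.idxOf t < l.idxOf a → M a t = 2) →
      (l.map cs.simple).prod = cs.simple a * ((l.erase a).map cs.simple).prod := by
  intro l
  induction l with
  | nil => simp
  | cons x xs ih =>
    intro hmem hcomm
    by_cases hx : x = a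
    · subst hx; rw [List.erase_cons_head]; simp
    · have hax : a ∈ xs := by
        rcases List.mem_cons.mp hmem with h | h
        · exact absurd h.symm hx
        · exact h
      have hMax : M a x = 2 := by
        apply hcomm x (List.mem_cons_self (a := x) (l := xs))
        rw [idx_cons_self, idx_cons_ne hx]
        omega
      have hcomm' : ∀ t ∈ xs, xs.idxOf t < xs.idxOf a → M a t = 2 := by
        intro t ht hlt
        apply hcomm t (List.mem_cons_of_mem x ht)
        by_cases htx : t = x
        · subst htx
          rw [idx_cons_self, idx_cons_ne hx]; omega
        · rw [idx_cons_ne (fun h => htx h.symm), idx_cons_ne hx]; omega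
      rw [List.erase_cons_tail (a := a) (b := x) (by simpa using hx)]
      simp only [List.map_cons, List.prod_cons]
      rw [ih hax hcomm', ← mul_assoc, ← simple_comm_of_M_eq_two cs hMax, mul_assoc]

private lemma aux_same_orientation {B W : Type*} [DecidableEq B] [Group W] {M : CoxeterMatrix B}
    (cs : CoxeterSystem M W) :
    ∀ l₁ l₂ : List B, l₁.Nodup → l₂.Nodup → (∀ b : B, b ∈ l₁ ↔ b ∈ l₂) →
      (∀ s t : B, s ∈ l₁ → t ∈ l₁ → s ≠ t → M s t ≠ 2 →
        (l₁.idxOf s < l₁.idxOf t ↔ l₂.idxOf s < l₂.idxOf t)) →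
      (l₁.map cs.simple).prod = (l₂.map cs.simple).prod := by
  intro l₁
  induction l₁ with
  | nil =>
    intro l₂ _ _ hmem _
    have : l₂ = [] := List.eq_nil_iff_forall_not_mem.mpr (fun b hb => by
      simpa using (hmem b).mpr hb)
    simp [this]
  | cons a rest ih =>
    intro l₂ h₁ h₂ hmem horient
    have hanr : a ∉ rest := (List.nodup_cons.mp h₁).1
    have hrest : rest.Nodup := (List.nodup_cons.mp h₁).2
    have ha₂ : a ∈ l₂ := (hmem a).mp (List.mem_cons_self (a := a) (l := rest))
    have hpull : (l₂.map cs.simple).prod =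
        cs.simple a * ((l₂.erase a).map cs.simple).prod := by
      apply pull_front cs a l₂ ha₂
      intro t ht hlt
      by_cases hta : t = a
      · subst hta; omega
      · by_contra hM
        have ht₁ : t ∈ a :: rest := (hmem t).mpr ht
        have key := (horient a t (List.mem_cons_self (a := a) (l := rest)) ht₁ (fun h => hta h.symm) hM).mp
        rw [idx_cons_self, idx_cons_ne (fun h => hta h.symm)] at key
        have := key (by omega)
        omega
    rw [hpull]
    simp only [List.map_cons, List.prod_cons]
    congr 1
    apply ih (l₂.erase a) hrest (h₂.erase a)
    · intro b
      rw [h₂.mem_erase_iff]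
      constructor
      · intro hb
        exact ⟨fun h => hanr (h ▸ hb), (hmem b).mp (List.mem_cons_of_mem a hb)⟩
      · rintro ⟨hba, hb⟩
        rcases List.mem_cons.mp ((hmem b).mpr hb) with h | h
        · exact absurd h hba
        · exact h
    · intro s t hs ht hst hM
      have hsa : s ≠ a := fun h => hanr (h ▸ hs)
      have hta : t ≠ a := fun h => hanr (h ▸ ht)
      rw [indexOf_erase_lt_iff hsa hta]
      rw [← horient s t (List.mem_cons_of_mem a hs) (List.mem_cons_of_mem a ht) hst hM]
      rw [idx_cons_ne (Ne.symm hsa), idx_cons_ne (Ne.symm hta)]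
      omega

/-- Two linear orderings of the standard generating set of a Coxeter group that induce
the same acyclic orientation of the Coxeter diagram (orienting each edge — i.e. each
pair of non-commuting generators — from the earlier to the later one) yield the same
Coxeter element. -/
theorem coxeterElement_eq_of_same_orientation
    {B W : Type*} [DecidableEq B] [Group W] {M : CoxeterMatrix B}
    (cs : CoxeterSystem M W) (l₁ l₂ : List B)
    (h₁ : l₁.Nodup) (h₂ : l₂.Nodup)
    (hall₁ : ∀ b : B, b ∈ l₁) (hall₂ : ∀ b : B, b ∈ l₂)
    (horient : ∀ s t : B, s ≠ t → M s t ≠ 2 →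
      (l₁.idxOf s < l₁.idxOf t ↔ l₂.idxOf s < l₂.idxOf t)) :
    (l₁.map cs.simple).prod = (l₂.map cs.simple).prod := by
  exact aux_same_orientation cs l₁ l₂ h₁ h₂ (fun b => ⟨fun _ => hall₂ b, fun _ => hall₁ b⟩)
    (fun s t _ _ hst hM => horient s t hst hM)
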